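/- If the shift $B_{(T_k)}$ is chaotic on $\ell^p((X_k)_k,J)$ with $1\le p<\infty$ (or on $c_0((X_k)_k,J)$), where $J=\mathbb{N}$ or $\mathbb{Z}$, then $B_{(T_k)}$ is mixing. -/

import Mathlib

open Filter Topology ENNReal

section Defs
variable {Y : Type*} [TopologicalSpace Y]

/-- A map is hypercyclic if some point has dense orbit. -/
def Hypercyclic (f : Y → Y) : Prop := ∃ y : Y, Dense (Set.range fun n : ℕ => f^[n] y)

/-- Topological transitivity. -/
def TopologicallyTransitive (f : Y → Y) : Prop :=
  ∀ U V : Set Y, IsOpen U → IsOpen V → U.Nonempty → V.Nonempty →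
    ∃ n : ℕ, (f^[n] '' U ∩ V).Nonempty

/-- Topological mixing: return sets of pairs of non-empty open sets are cofinite. -/
def TopologicallyMixing (f : Y → Y) : Prop :=
  ∀ U V : Set Y, IsOpen U → IsOpen V → U.Nonempty → V.Nonempty →
    ∃ N : ℕ, ∀ n ≥ N, (f^[n] '' U ∩ V).Nonempty

/-- Weak mixing: `f ⊕ f` is hypercyclic. -/
def WeaklyMixing (f : Y → Y) : Prop := Hypercyclic (fun q : Y × Y => (f q.1, f q.2))

/-- Chaos in the sense of Devaney: hypercyclic with a dense set of periodic points. -/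
def Chaotic (f : Y → Y) : Prop :=
  Hypercyclic f ∧ Dense {y : Y | ∃ d : ℕ, 1 ≤ d ∧ f^[d] y = y}

/-- Lower density of a set of natural numbers. -/
noncomputable def lowerDensity (A : Set ℕ) : ℝ :=
  Filter.liminf
    (fun N : ℕ => (∑ n ∈ Finset.range N, Set.indicator A (fun _ => (1 : ℝ)) n) / N)
    Filter.atTop

/-- Frequent hypercyclicity: some orbit visits every non-empty open set along a set of
positive lower density. -/
def FrequentlyHypercyclic (f : Y → Y) : Prop :=
  ∃ y : Y, ∀ U : Set Y, IsOpen U → U.Nonempty → 0 < lowerDensity {n : ℕ | f^[n] y ∈ U}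

end Defs

/-- The `c₀`-sum of a family of normed spaces, realised as a submodule of `lp E ∞`:
those bounded families whose norms tend to `0` along the cofinite filter. -/
noncomputable def c0Sum {ι : Type*} (E : ι → Type*) [∀ i, NormedAddCommGroup (E i)]
    [∀ i, NormedSpace ℝ (E i)] : Submodule ℝ (lp E ∞) where
  carrier := {x | Tendsto (fun i => ‖(x : ∀ i, E i) i‖) cofinite (nhds 0)}
  add_mem' := by
    intro a b ha hb
    refine squeeze_zero (fun i => norm_nonneg _) (fun i => ?_) (by simpa using ha.add hb)
    simp only [lp.coeFn_add, Pi.add_apply]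
    exact norm_add_le _ _
  zero_mem' := by
    simp only [Set.mem_setOf_eq, lp.coeFn_zero, Pi.zero_apply, norm_zero]
    exact tendsto_const_nhds
  smul_mem' := by
    intro c a ha
    have h : Tendsto (fun i => ‖c‖ * ‖(a : ∀ i, E i) i‖) cofinite (nhds 0) := by
      simpa using ha.const_mul ‖c‖
    refine squeeze_zero (fun i => norm_nonneg _) (fun i => ?_) h
    simp only [lp.coeFn_smul, Pi.smul_apply]
    exact (norm_smul c _).le

/-- The identity, as a continuous linear map between equal members of a family of spaces. -/
def castL (E : ℤ → Type*) [∀ k, NormedAddCommGroup (E k)] [∀ k, NormedSpace ℝ (E k)]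
    {j k : ℤ} (h : j = k) : E j →L[ℝ] E k := by
  subst h; exact ContinuousLinearMap.id ℝ (E j)

/-- The composite `T_{j,j+n} = T_{j+1} ∘ ⋯ ∘ T_{j+n} : E (j+n) → E j` (here `T k` denotes
the operator `E (k+1) → E k`). -/
noncomputable def iterComp {E : ℤ → Type*} [∀ k, NormedAddCommGroup (E k)]
    [∀ k, NormedSpace ℝ (E k)] (T : ∀ k : ℤ, E (k + 1) →L[ℝ] E k) :
    ∀ (j : ℤ) (n : ℕ), E (j + n) →L[ℝ] E j
  | j, 0 => castL E (by simp)
  | j, (n + 1) => (iterComp T j n).comp ((T (j + n)).comp (castL E (by push_cast; ring)))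

set_option maxHeartbeats 1000000

theorem generic_mixing {ι : Type*} {E : ι → Type*} [∀ i, NormedAddCommGroup (E i)]
    {X : Type*} [NormedAddCommGroup X] [NormedSpace ℝ X]
    (coord : ∀ i, X → E i) (sing : ∀ i, E i → X) (succ : ι → ι)
    (B : X →L[ℝ] X)
    (hcoord_norm : ∀ (i) (x : X), ‖coord i x‖ ≤ ‖x‖)
    (hsing_norm : ∀ (i) (y : E i), ‖sing i y‖ ≤ ‖y‖)
    (h_cs : ∀ (i) (y : E i), coord i (sing i y) = y)
    (h_cs' : ∀ {i j} (y : E j), i ≠ j → coord i (sing j y) = 0)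
    (h_ext : ∀ x y : X, (∀ i, coord i x = coord i y) → x = y)
    (h_zero : ∀ i, coord i (0 : X) = 0)
    (h_dense : ∀ (x : X) (ε : ℝ), 0 < ε → ∃ s : Finset ι,
      ‖x - ∑ i ∈ s, sing i (coord i x)‖ < ε)
    (h_tail : ∀ x : X, Tendsto (fun i => ‖coord i x‖) cofinite (𝓝 0))
    (hsucc : Function.Injective succ)
    (h_orbit : ∀ k, Function.Injective (fun n : ℕ => succ^[n] k))
    (hdep : ∀ (i) (x y : X), coord (succ i) x = coord (succ i) y →
      coord i (B x) = coord i (B y))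
    (hcase : (∀ j : ι, ∀ᶠ n in atTop, ∀ i, succ^[n] i ≠ j) ∨
      (∀ (j : ι) (n : ℕ), ∃ i, succ^[n] i = j))
    (hper : Dense {y : X | ∃ d : ℕ, 1 ≤ d ∧ (⇑B)^[d] y = y}) :
    TopologicallyMixing ⇑B := by
  classical
  set C : ℝ := max ‖B‖ 1 with hCdef
  have hC1 : (1:ℝ) ≤ C := le_max_right _ _
  have hC0 : (0:ℝ) < C := lt_of_lt_of_le one_pos hC1
  -- iterated dependence
  have hdepn : ∀ (n : ℕ) (i) (x y : X), coord (succ^[n] i) x = coord (succ^[n] i) y →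
      coord i ((⇑B)^[n] x) = coord i ((⇑B)^[n] y) := by
    intro n
    induction n with
    | zero => intro i x y h; simpa using h
    | succ n ih =>
      intro i x y h
      rw [Function.iterate_succ_apply, Function.iterate_succ_apply]
      refine ih i (B x) (B y) ?_
      refine hdep (succ^[n] i) x y ?_
      rwa [← Function.iterate_succ_apply' succ n i] 
  -- one-step norm bound
  have hC : ∀ (i) (x : X), ‖coord i (B x)‖ ≤ C * ‖coord (succ i) x‖ := by
    intro i x
    have h1 : coord i (B x) = coord i (B (sing (succ i) (coord (succ i) x))) :=
      hdep i _ _ (by rw [h_cs])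
    calc ‖coord i (B x)‖ = ‖coord i (B (sing (succ i) (coord (succ i) x)))‖ := by rw [h1]
      _ ≤ ‖B (sing (succ i) (coord (succ i) x))‖ := hcoord_norm _ _
      _ ≤ ‖B‖ * ‖sing (succ i) (coord (succ i) x)‖ := B.le_opNorm _
      _ ≤ ‖B‖ * ‖coord (succ i) x‖ := by
          exact mul_le_mul_of_nonneg_left (hsing_norm _ _) (norm_nonneg _)
      _ ≤ C * ‖coord (succ i) x‖ := by
          exact mul_le_mul_of_nonneg_right (le_max_left _ _) (norm_nonneg _)
  have hCn : ∀ (n : ℕ) (i) (x : X), ‖coord i ((⇑B)^[n] x)‖ ≤ C^n * ‖coord (succ^[n] i) x‖ := by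
    intro n
    induction n with
    | zero => intro i x; simp; exact le_rfl
    | succ n ih =>
      intro i x
      rw [Function.iterate_succ_apply']
      calc ‖coord i (B ((⇑B)^[n] x))‖ ≤ C * ‖coord (succ i) ((⇑B)^[n] x)‖ := hC _ _
        _ ≤ C * (C^n * ‖coord (succ^[n] (succ i)) x‖) := by
            exact mul_le_mul_of_nonneg_left (ih (succ i) x) (le_of_lt hC0)
        _ = C^(n+1) * ‖coord (succ^[n+1] i) x‖ := by
            rw [← Function.iterate_succ_apply, pow_succ]; ring
  have hB0 : ∀ n : ℕ, (⇑B)^[n] (0 : X) = 0 := fun n => Function.iterate_fixed (map_zero B) n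
  -- B^[n] of a single, when the index has an n-th predecessor
  have hsingle_form : ∀ (n : ℕ) (j) (y : E j) (i), succ^[n] i = j →
      (⇑B)^[n] (sing j y) = sing i (coord i ((⇑B)^[n] (sing j y))) := by
    intro n j y i hij
    refine h_ext _ _ fun i' => ?_
    by_cases hii : i' = i
    · subst hii; rw [h_cs]
    · have hne : succ^[n] i' ≠ j := by
        rw [← hij]; exact fun hcon => hii ((hsucc.iterate n) hcon)
      have : coord i' ((⇑B)^[n] (sing j y)) = coord i' ((⇑B)^[n] (0:X)) :=
        hdepn n i' _ _ (by rw [h_cs' y hne, h_zero])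
      rw [this, hB0, h_zero, h_cs' _ hii]
  -- B^[n] of a single is 0 if no n-th predecessor
  have hzero_single : ∀ (n : ℕ) (j) (y : E j), (∀ i, succ^[n] i ≠ j) →
      (⇑B)^[n] (sing j y) = 0 := by
    intro n j y hno
    refine h_ext _ _ fun i => ?_
    have : coord i ((⇑B)^[n] (sing j y)) = coord i ((⇑B)^[n] (0:X)) :=
      hdepn n i _ _ (by rw [h_cs' y (hno i), h_zero])
    rw [this, hB0]
  -- division tendsto helper
  have hdiv_tendsto : ∀ d : ℕ, 1 ≤ d → Tendsto (fun n : ℕ => n / d) atTop atTop := by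
    intro d hd
    refine tendsto_atTop_atTop.mpr fun b => ⟨b * d, fun n hn => ?_⟩
    exact (Nat.le_div_iff_mul_le hd).mpr hn
  -- the backward construction
  have hback : ∀ (z : X) (d : ℕ), 1 ≤ d → (⇑B)^[d] z = z → ∀ k : ι,
      ∃ s : ℕ → X, (∀ n, (⇑B)^[n] (s n) = sing k (coord k z)) ∧
        Tendsto (fun n => ‖s n‖) atTop (𝓝 0) := by
    intro z d hd hz k
    have hzm : ∀ m : ℕ, (⇑B)^[m * d] z = z := by
      intro m
      rw [mul_comm, Function.iterate_mul]
      exact Function.iterate_fixed hz m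
    have hnm : ∀ n : ℕ, n + ((n/d+1) * d - n) = (n/d+1) * d := by
      intro n
      have h1 : (n/d+1) * d = d * (n/d) + d := by ring
      have h2 : d * (n / d) + n % d = n := Nat.div_add_mod n d
      have h3 : n % d < d := Nat.mod_lt _ hd
      omega
    have hrd : ∀ n : ℕ, (n/d+1) * d - n ≤ d := by
      intro n
      have h1 : (n/d+1) * d = d * (n/d) + d := by ring
      have h2 : d * (n / d) + n % d = n := Nat.div_add_mod n d
      omega
    refine ⟨fun n => sing (succ^[n] k) (coord (succ^[n] k) ((⇑B)^[(n/d+1)*d - n] z)), ?_, ?_⟩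
    · intro n
      have key : (⇑B)^[n] ((⇑B)^[(n/d+1)*d - n] z) = z := by
        rw [← Function.iterate_add_apply, hnm n, hzm]
      rw [hsingle_form n (succ^[n] k) (coord (succ^[n] k) ((⇑B)^[(n/d+1)*d - n] z)) k rfl]
      congr 1
      have h2 : coord k ((⇑B)^[n] (sing (succ^[n] k)
            (coord (succ^[n] k) ((⇑B)^[(n/d+1)*d - n] z)))) =
          coord k ((⇑B)^[n] ((⇑B)^[(n/d+1)*d - n] z)) :=
        hdepn n k _ _ (by rw [h_cs])
      rw [h2, key]
    · have hbound : ∀ n, ‖sing (succ^[n] k) (coord (succ^[n] k) ((⇑B)^[(n/d+1)*d - n] z))‖ ≤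
          C^d * ‖coord (succ^[(n/d+1)*d] k) z‖ := by
        intro n
        have hidx : succ^[(n/d+1)*d - n] (succ^[n] k) = succ^[(n/d+1)*d] k := by
          rw [← Function.iterate_add_apply]
          congr 1
          have := hnm n
          omega
        calc ‖sing (succ^[n] k) (coord (succ^[n] k) ((⇑B)^[(n/d+1)*d - n] z))‖
            ≤ ‖coord (succ^[n] k) ((⇑B)^[(n/d+1)*d - n] z)‖ := hsing_norm _ _
          _ ≤ C^((n/d+1)*d - n) * ‖coord (succ^[(n/d+1)*d - n] (succ^[n] k)) z‖ := hCn _ _ _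
          _ ≤ C^d * ‖coord (succ^[(n/d+1)*d] k) z‖ := by
              rw [hidx]
              exact mul_le_mul_of_nonneg_right (pow_le_pow_right₀ hC1 (hrd n)) (norm_nonneg _)
      refine squeeze_zero (fun n => norm_nonneg _) hbound ?_
      have hφ : Function.Injective (fun m : ℕ => succ^[m * d] k) := by
        intro a b hab
        have h3 : (fun n : ℕ => succ^[n] k) (a * d) = (fun n : ℕ => succ^[n] k) (b * d) := hab
        have h4 := h_orbit k h3
        exact Nat.eq_of_mul_eq_mul_right hd h4
      have hcomp : Tendsto (fun n : ℕ => succ^[(n/d+1)*d] k) atTop cofinite := by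
        have h1 : Tendsto (fun n : ℕ => n / d + 1) atTop cofinite := by
          rw [Nat.cofinite_eq_atTop]
          exact tendsto_atTop_mono (fun n => Nat.le_succ (n/d)) (hdiv_tendsto d hd)
        exact hφ.tendsto_cofinite.comp h1
      have := (h_tail z).comp hcomp
      have h2 := this.const_mul (C^d)
      simpa using h2
  -- the forward smallness
  have hfwd : ∀ (z : X) (d : ℕ), 1 ≤ d → (⇑B)^[d] z = z → ∀ j,
      Tendsto (fun n => ‖(⇑B)^[n] (sing j (coord j z))‖) atTop (𝓝 0) := by
    intro z d hd hz j
    have hd0 : 0 < d := hd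
    rcases hcase with hvan | hex
    · refine tendsto_const_nhds.congr' ?_
      filter_upwards [hvan j] with n hn
      rw [hzero_single n j _ hn, norm_zero]
    · have hzm : ∀ m : ℕ, (⇑B)^[m * d] z = z := by
        intro m
        rw [mul_comm, Function.iterate_mul]
        exact Function.iterate_fixed hz m
      set h : ℕ → ι := fun m => Classical.choose (hex j (m*d)) with hhdef
      have hhj : ∀ m, succ^[m*d] (h m) = j := fun m => Classical.choose_spec (hex j (m*d))
      have hinj : Function.Injective h := by
        intro a b hab
        have h1 : succ^[a*d] (h a) = j := hhj a
        have h2 : succ^[b*d] (h a) = j := by rw [hab]; exact hhj b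
        have h3 : (fun n : ℕ => succ^[n] (h a)) (a*d) = (fun n : ℕ => succ^[n] (h a)) (b*d) :=
          h1.trans h2.symm
        have h4 := h_orbit (h a) h3
        exact Nat.eq_of_mul_eq_mul_right hd0 h4
      have hbound : ∀ n, ‖(⇑B)^[n] (sing j (coord j z))‖ ≤ C^d * ‖coord (h (n/d)) z‖ := by
        intro n
        obtain ⟨i, hi⟩ := hex j n
        have hstep : succ^[n % d] i = h (n/d) := by
          apply hsucc.iterate (n/d*d)
          rw [hhj, ← Function.iterate_add_apply, Nat.div_add_mod', hi]
        have e1 : (⇑B)^[n] (sing j (coord j z)) =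
            sing i (coord i ((⇑B)^[n] (sing j (coord j z)))) := hsingle_form n j _ i hi
        have e2 : coord i ((⇑B)^[n] (sing j (coord j z))) = coord i ((⇑B)^[n] z) :=
          hdepn n i _ _ (by rw [hi, h_cs])
        have e3 : (⇑B)^[n] z = (⇑B)^[n % d] z := by
          have hdm : n % d + n/d*d = n := by
            have := Nat.div_add_mod' n d
            omega
          calc (⇑B)^[n] z = (⇑B)^[n % d + n/d*d] z := by rw [hdm]
            _ = (⇑B)^[n % d] ((⇑B)^[n/d*d] z) := Function.iterate_add_apply _ _ _ _
            _ = (⇑B)^[n % d] z := by rw [hzm]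
        calc ‖(⇑B)^[n] (sing j (coord j z))‖
            = ‖sing i (coord i ((⇑B)^[n] (sing j (coord j z))))‖ := by rw [← e1]
          _ ≤ ‖coord i ((⇑B)^[n] (sing j (coord j z)))‖ := hsing_norm _ _
          _ = ‖coord i ((⇑B)^[n % d] z)‖ := by rw [e2, e3]
          _ ≤ C^(n % d) * ‖coord (succ^[n % d] i) z‖ := hCn _ _ _
          _ ≤ C^d * ‖coord (h (n/d)) z‖ := by
              rw [hstep]
              exact mul_le_mul_of_nonneg_right
                (pow_le_pow_right₀ hC1 (le_of_lt (Nat.mod_lt _ hd0))) (norm_nonneg _)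
      refine squeeze_zero (fun n => norm_nonneg _) hbound ?_
      have hcomp : Tendsto (fun n : ℕ => h (n/d)) atTop cofinite := by
        have h1 : Tendsto (fun n : ℕ => n / d) atTop cofinite := by
          rw [Nat.cofinite_eq_atTop]; exact hdiv_tendsto d hd
        exact hinj.tendsto_cofinite.comp h1
      have h2 := ((h_tail z).comp hcomp).const_mul (C^d)
      simpa using h2
  -- iterates are additive
  have hadd : ∀ (n : ℕ) (a b : X), (⇑B)^[n] (a + b) = (⇑B)^[n] a + (⇑B)^[n] b := by
    intro n
    induction n with
    | zero => intro a b; simp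
    | succ n ih => intro a b; simp [Function.iterate_succ_apply', ih]
  have hsum : ∀ (n : ℕ) (s : Finset ι) (f : ι → X),
      (⇑B)^[n] (∑ i ∈ s, f i) = ∑ i ∈ s, (⇑B)^[n] (f i) := by
    intro n
    induction n with
    | zero => intro s f; simp
    | succ n ih => intro s f; simp [Function.iterate_succ_apply', ih]
  -- main argument
  intro U V hU hV hUne hVne
  obtain ⟨u₀, hu₀⟩ := hUne
  obtain ⟨v₀, hv₀⟩ := hVne
  obtain ⟨ε, hε, hballU⟩ := Metric.isOpen_iff.mp hU u₀ hu₀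
  obtain ⟨δ, hδ, hballV⟩ := Metric.isOpen_iff.mp hV v₀ hv₀
  obtain ⟨zu, hzu_mem, hzu_dist⟩ := hper.exists_dist_lt u₀ (by positivity : (0:ℝ) < ε/4)
  obtain ⟨du, hdu, hzu⟩ := hzu_mem
  obtain ⟨su, hsu⟩ := h_dense zu (ε/4) (by positivity)
  obtain ⟨zv, hzv_mem, hzv_dist⟩ := hper.exists_dist_lt v₀ (by positivity : (0:ℝ) < δ/4)
  obtain ⟨dv, hdv, hzv⟩ := hzv_mem
  obtain ⟨sv, hsv⟩ := h_dense zv (δ/4) (by positivity)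
  set Pu := ∑ i ∈ su, sing i (coord i zu) with hPu
  set Pv := ∑ i ∈ sv, sing i (coord i zv) with hPv
  have T1 : Tendsto (fun n => ‖(⇑B)^[n] Pu‖) atTop (𝓝 0) := by
    have hb : ∀ n, ‖(⇑B)^[n] Pu‖ ≤ ∑ i ∈ su, ‖(⇑B)^[n] (sing i (coord i zu))‖ := by
      intro n
      rw [hPu, hsum]
      exact norm_sum_le _ _
    refine squeeze_zero (fun n => norm_nonneg _) hb ?_
    have := tendsto_finset_sum su (fun i _ => hfwd zu du hdu hzu i)
    simpa using this
  choose sfun hs1 hs2 using fun k => hback zv dv hdv hzv k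
  have T2 : Tendsto (fun n => ∑ k ∈ sv, ‖sfun k n‖) atTop (𝓝 0) := by
    have := tendsto_finset_sum sv (fun k _ => hs2 k)
    simpa using this
  have e1 : ∀ᶠ n in atTop, ‖(⇑B)^[n] Pu‖ < δ/2 := T1.eventually (gt_mem_nhds (by positivity))
  have e2 : ∀ᶠ n in atTop, ∑ k ∈ sv, ‖sfun k n‖ < ε/2 :=
    T2.eventually (gt_mem_nhds (by positivity))
  obtain ⟨N, hN⟩ := eventually_atTop.mp (e1.and e2)
  refine ⟨N, fun n hn => ?_⟩
  obtain ⟨hn1, hn2⟩ := hN n hn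
  set w := Pu + ∑ k ∈ sv, sfun k n with hw
  have hwU : w ∈ U := by
    apply hballU
    rw [Metric.mem_ball, dist_eq_norm]
    have hdecomp : w - u₀ = (zu - u₀) + (Pu - zu) + ∑ k ∈ sv, sfun k n := by
      rw [hw]; abel
    rw [hdecomp]
    have h1 : ‖zu - u₀‖ < ε/4 := by rw [← dist_eq_norm, dist_comm]; exact hzu_dist
    have h2 : ‖Pu - zu‖ < ε/4 := by rw [norm_sub_rev]; exact hsu
    calc ‖(zu - u₀) + (Pu - zu) + ∑ k ∈ sv, sfun k n‖
        ≤ ‖(zu - u₀) + (Pu - zu)‖ + ‖∑ k ∈ sv, sfun k n‖ := norm_add_le _ _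
      _ ≤ (‖zu - u₀‖ + ‖Pu - zu‖) + ∑ k ∈ sv, ‖sfun k n‖ :=
          add_le_add (norm_add_le _ _) (norm_sum_le _ _)
      _ < ε := by linarith
  have hBw : (⇑B)^[n] w = (⇑B)^[n] Pu + Pv := by
    have h3 : (⇑B)^[n] (∑ k ∈ sv, sfun k n) = Pv := by
      rw [hsum n sv (fun k => sfun k n), hPv]
      exact Finset.sum_congr rfl fun k _ => hs1 k n
    rw [hw, hadd, h3]
  have hwV : (⇑B)^[n] w ∈ V := by
    apply hballV
    rw [Metric.mem_ball, dist_eq_norm, hBw]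
    have hdecomp : (⇑B)^[n] Pu + Pv - v₀ = (⇑B)^[n] Pu + (Pv - zv) + (zv - v₀) := by abel
    rw [hdecomp]
    have h1 : ‖zv - v₀‖ < δ/4 := by rw [← dist_eq_norm, dist_comm]; exact hzv_dist
    have h2 : ‖Pv - zv‖ < δ/4 := by rw [norm_sub_rev]; exact hsv
    calc ‖(⇑B)^[n] Pu + (Pv - zv) + (zv - v₀)‖
        ≤ ‖(⇑B)^[n] Pu + (Pv - zv)‖ + ‖zv - v₀‖ := norm_add_le _ _
      _ ≤ (‖(⇑B)^[n] Pu‖ + ‖Pv - zv‖) + ‖zv - v₀‖ :=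
          add_le_add (norm_add_le _ _) le_rfl
      _ < δ := by linarith
  exact ⟨(⇑B)^[n] w, ⟨w, hwU, rfl⟩, hwV⟩

theorem lp_mixing {ι : Type*} [DecidableEq ι] {E : ι → Type*} [∀ i, NormedAddCommGroup (E i)]
    [∀ i, NormedSpace ℝ (E i)] (p : ℝ≥0∞) [Fact (1 ≤ p)] (hp : p ≠ ∞)
    (succ : ι → ι) (hsucc : Function.Injective succ)
    (h_orbit : ∀ k, Function.Injective (fun n : ℕ => succ^[n] k))
    (hcase : (∀ j : ι, ∀ᶠ n in atTop, ∀ i, succ^[n] i ≠ j) ∨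
      (∀ (j : ι) (n : ℕ), ∃ i, succ^[n] i = j))
    (B : lp E p →L[ℝ] lp E p)
    (hdep : ∀ (i) (x y : lp E p), (x : ∀ i, E i) (succ i) = (y : ∀ i, E i) (succ i) →
      (B x : ∀ i, E i) i = (B y : ∀ i, E i) i)
    (hper : Dense {y : lp E p | ∃ d : ℕ, 1 ≤ d ∧ (⇑B)^[d] y = y}) :
    TopologicallyMixing ⇑B := by
  have hp0 : p ≠ 0 := (lt_of_lt_of_le zero_lt_one Fact.out).ne'
  have hpt : 0 < p.toReal := ENNReal.toReal_pos hp0 hp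
  refine generic_mixing (fun i (x : lp E p) => x i) (fun i y => lp.single p i y) succ B
    ?_ ?_ ?_ ?_ ?_ ?_ ?_ ?_ hsucc h_orbit hdep hcase hper
  · exact fun i x => lp.norm_apply_le_norm hp0 x i
  · intro i y
    have h1 : (lp.single p i y : ∀ j, E j) i = y := lp.single_apply_self p i y
    have h2 : ‖lp.single p i y‖ = ‖(lp.single p i y : ∀ j, E j) i‖ := by
      rw [h1]; exact lp.norm_single (pos_iff_ne_zero.mpr hp0) i y
    rw [h1] at h2
    exact le_of_eq h2
  · exact fun i y => lp.single_apply_self p i y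
  · exact fun {i j} y hij => lp.single_apply_ne p j y hij
  · exact fun x y h => lp.ext (funext h)
  · intro i; simp
  · intro x ε hε
    have hs := lp.hasSum_single hp x
    obtain ⟨s, hs'⟩ := eventually_atTop.mp (Metric.tendsto_nhds.mp hs ε hε)
    refine ⟨s, ?_⟩
    have := hs' s le_rfl
    rw [dist_eq_norm] at this
    rw [norm_sub_rev]
    exact this
  · intro x
    have hsum := (lp.memℓp x).summable hpt
    have h0 := hsum.tendsto_cofinite_zero
    refine Metric.tendsto_nhds.mpr fun ε hε => ?_
    have h1 := Metric.tendsto_nhds.mp h0 (ε ^ p.toReal)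
      (Real.rpow_pos_of_pos hε _)
    filter_upwards [h1] with i hi
    rw [dist_zero_right, Real.norm_eq_abs,
      abs_of_nonneg (Real.rpow_nonneg (norm_nonneg _) _)] at hi
    rw [dist_zero_right, Real.norm_eq_abs, abs_of_nonneg (norm_nonneg _)]
    exact (Real.rpow_lt_rpow_iff (norm_nonneg _) hε.le hpt).mp hi

theorem c0_mixing {ι : Type*} [DecidableEq ι] {E : ι → Type*} [∀ i, NormedAddCommGroup (E i)]
    [∀ i, NormedSpace ℝ (E i)]
    (succ : ι → ι) (hsucc : Function.Injective succ)
    (h_orbit : ∀ k, Function.Injective (fun n : ℕ => succ^[n] k))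
    (hcase : (∀ j : ι, ∀ᶠ n in atTop, ∀ i, succ^[n] i ≠ j) ∨
      (∀ (j : ι) (n : ℕ), ∃ i, succ^[n] i = j))
    (B : c0Sum E →L[ℝ] c0Sum E)
    (hdep : ∀ (i) (x y : c0Sum E),
      ((x : lp E ∞) : ∀ i, E i) (succ i) = ((y : lp E ∞) : ∀ i, E i) (succ i) →
      ((B x : lp E ∞) : ∀ i, E i) i = ((B y : lp E ∞) : ∀ i, E i) i)
    (hper : Dense {y : c0Sum E | ∃ d : ℕ, 1 ≤ d ∧ (⇑B)^[d] y = y}) :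
    TopologicallyMixing ⇑B := by
  have hmem : ∀ (i : ι) (y : E i), lp.single ∞ i y ∈ c0Sum E := by
    intro i y
    show Tendsto (fun j => ‖(lp.single ∞ i y : ∀ j, E j) j‖) cofinite (𝓝 0)
    have hfin : ({i} : Set ι).Finite := Set.finite_singleton i
    refine tendsto_const_nhds.congr' ?_
    filter_upwards [Set.Finite.eventually_cofinite_notMem hfin] with j hj
    rw [lp.single_apply_ne ∞ i y (by simpa using hj), norm_zero]
  have hnorm : ∀ x : c0Sum E, ‖x‖ = ‖(x : lp E ∞)‖ := fun x => rfl
  refine generic_mixing (fun i (x : c0Sum E) => ((x : lp E ∞) : ∀ i, E i) i)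
    (fun i y => (⟨lp.single ∞ i y, hmem i y⟩ : c0Sum E)) succ B
    ?_ ?_ ?_ ?_ ?_ ?_ ?_ ?_ hsucc h_orbit hdep hcase hper
  · intro i x
    rw [hnorm]
    exact lp.norm_apply_le_norm ENNReal.top_ne_zero _ i
  · intro i y
    rw [hnorm]
    refine lp.norm_le_of_forall_le (norm_nonneg y) fun j => ?_
    by_cases hj : j = i
    · subst hj; rw [lp.single_apply_self]
    · rw [lp.single_apply_ne ∞ i y hj, norm_zero]; exact norm_nonneg y
  · exact fun i y => lp.single_apply_self ∞ i y
  · exact fun {i j} y hij => lp.single_apply_ne ∞ j y hij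
  · exact fun x y h => Subtype.ext (lp.ext (funext h))
  · intro i; simp
  · intro x ε hε
    classical
    have hx : Tendsto (fun i => ‖((x : lp E ∞) : ∀ i, E i) i‖) cofinite (𝓝 0) := x.2
    have hev : ∀ᶠ j in cofinite, ‖((x : lp E ∞) : ∀ i, E i) j‖ < ε/2 := by
      have := Metric.tendsto_nhds.mp hx (ε/2) (by positivity)
      filter_upwards [this] with j hj
      rwa [dist_zero_right, Real.norm_eq_abs, abs_of_nonneg (norm_nonneg _)] at hj
    have hfin : {j | ¬ ‖((x : lp E ∞) : ∀ i, E i) j‖ < ε/2}.Finite :=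
      eventually_cofinite.mp hev
    refine ⟨hfin.toFinset, ?_⟩
    set s := hfin.toFinset with hs
    have hcoe : ((x - ∑ i ∈ s, (⟨lp.single ∞ i (((x : lp E ∞) : ∀ i, E i) i), hmem i _⟩ : c0Sum E)
        : c0Sum E) : lp E ∞) =
        (x : lp E ∞) - ∑ i ∈ s, lp.single ∞ i (((x : lp E ∞) : ∀ i, E i) i) := by
      push_cast
      rfl
    have hkey : ∀ j, ‖(((x : lp E ∞) - ∑ i ∈ s, lp.single ∞ i (((x : lp E ∞) : ∀ i, E i) i)
        : lp E ∞) : ∀ i, E i) j‖ ≤ ε/2 := by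
      intro j
      have hsum_app : (((∑ i ∈ s, lp.single ∞ i (((x : lp E ∞) : ∀ i, E i) i)) : lp E ∞)
          : ∀ i, E i) j = ∑ i ∈ s, (lp.single ∞ i (((x : lp E ∞) : ∀ i, E i) i) : ∀ i', E i') j := by
        rw [lp.coeFn_sum, Finset.sum_apply]
      by_cases hj : j ∈ s
      · have : (∑ i ∈ s, (lp.single ∞ i (((x : lp E ∞) : ∀ i, E i) i) : ∀ i', E i') j)
            = ((x : lp E ∞) : ∀ i, E i) j := by
          rw [Finset.sum_eq_single_of_mem j hj]
          · exact lp.single_apply_self ∞ j _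
          · intro i hi hij
            exact lp.single_apply_ne ∞ i _ (Ne.symm hij)
        rw [lp.coeFn_sub, Pi.sub_apply, hsum_app, this, sub_self, norm_zero]
        positivity
      · have : (∑ i ∈ s, (lp.single ∞ i (((x : lp E ∞) : ∀ i, E i) i) : ∀ i', E i') j) = 0 := by
          refine Finset.sum_eq_zero fun i hi => ?_
          refine lp.single_apply_ne ∞ i _ fun hji => ?_
          exact hj (hji ▸ hi)
        rw [lp.coeFn_sub, Pi.sub_apply, hsum_app, this, sub_zero]
        have hj' : ‖((x : lp E ∞) : ∀ i, E i) j‖ < ε/2 := by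
          by_contra hcon
          exact hj (by rw [hs, Set.Finite.mem_toFinset]; exact hcon)
        exact hj'.le
    calc ‖x - ∑ i ∈ s, (⟨lp.single ∞ i (((x : lp E ∞) : ∀ i, E i) i), hmem i _⟩ : c0Sum E)‖
        = ‖(x : lp E ∞) - ∑ i ∈ s, lp.single ∞ i (((x : lp E ∞) : ∀ i, E i) i)‖ := by
          rw [hnorm, hcoe]
      _ ≤ ε/2 := lp.norm_le_of_forall_le (by positivity) hkey
      _ < ε := by linarith
  · exact fun x => x.2

/-- if the shift `B_{(T_k)}` is chaotic on `ℓ^p((X_k)_k,J)` or on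
`c₀((X_k)_k,J)` (`J = ℕ` or `ℤ`), then it is mixing. -/
theorem stmt_11 (EN : ℕ → Type*) [∀ k, NormedAddCommGroup (EN k)] [∀ k, NormedSpace ℝ (EN k)]
    [∀ k, CompleteSpace (EN k)] (TN : ∀ k : ℕ, EN (k + 1) →L[ℝ] EN k)
    (EZ : ℤ → Type*) [∀ k, NormedAddCommGroup (EZ k)] [∀ k, NormedSpace ℝ (EZ k)]
    [∀ k, CompleteSpace (EZ k)] (TZ : ∀ k : ℤ, EZ (k + 1) →L[ℝ] EZ k)
    (p : ℝ≥0∞) [Fact (1 ≤ p)] (hp : p ≠ ∞) :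
    (∀ B : lp EN p →L[ℝ] lp EN p,
      (∀ (x : lp EN p) (k : ℕ), (B x : ∀ i, EN i) k = TN k ((x : ∀ i, EN i) (k + 1))) →
      Chaotic ⇑B → TopologicallyMixing ⇑B)
    ∧ (∀ B : c0Sum EN →L[ℝ] c0Sum EN,
      (∀ (x : c0Sum EN) (k : ℕ),
        ((B x : lp EN ∞) : ∀ i, EN i) k = TN k (((x : lp EN ∞) : ∀ i, EN i) (k + 1))) →
      Chaotic ⇑B → TopologicallyMixing ⇑B)
    ∧ (∀ B : lp EZ p →L[ℝ] lp EZ p,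
      (∀ (x : lp EZ p) (k : ℤ), (B x : ∀ i, EZ i) k = TZ k ((x : ∀ i, EZ i) (k + 1))) →
      Chaotic ⇑B → TopologicallyMixing ⇑B)
    ∧ (∀ B : c0Sum EZ →L[ℝ] c0Sum EZ,
      (∀ (x : c0Sum EZ) (k : ℤ),
        ((B x : lp EZ ∞) : ∀ i, EZ i) k = TZ k (((x : lp EZ ∞) : ∀ i, EZ i) (k + 1))) →
      Chaotic ⇑B → TopologicallyMixing ⇑B) := by
  have natIter : ∀ (n i : ℕ), (fun k : ℕ => k+1)^[n] i = i + n := by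
    intro n
    induction n with
    | zero => intro i; simp
    | succ n ih => intro i; rw [Function.iterate_succ_apply, ih]; omega
  have intIter : ∀ (n : ℕ) (i : ℤ), (fun k : ℤ => k+1)^[n] i = i + n := by
    intro n
    induction n with
    | zero => intro i; simp
    | succ n ih => intro i; rw [Function.iterate_succ_apply, ih]; push_cast; ring
  have hsuccN : Function.Injective (fun k : ℕ => k+1) := fun a b h => Nat.succ_injective h
  have hsuccZ : Function.Injective (fun k : ℤ => k+1) := fun a b h => add_left_injective 1 h
  have horbN : ∀ k : ℕ, Function.Injective (fun n : ℕ => (fun k : ℕ => k+1)^[n] k) := by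
    intro k a b h
    simp only [natIter] at h
    omega
  have horbZ : ∀ k : ℤ, Function.Injective (fun n : ℕ => (fun k : ℤ => k+1)^[n] k) := by
    intro k a b h
    simp only [intIter] at h
    omega
  have hcaseN : (∀ j : ℕ, ∀ᶠ n in atTop, ∀ i, (fun k : ℕ => k+1)^[n] i ≠ j) ∨
      (∀ (j : ℕ) (n : ℕ), ∃ i, (fun k : ℕ => k+1)^[n] i = j) := by
    left
    intro j
    filter_upwards [eventually_gt_atTop j] with n hn i
    rw [natIter]
    omega
  have hcaseZ : (∀ j : ℤ, ∀ᶠ n in atTop, ∀ i, (fun k : ℤ => k+1)^[n] i ≠ j) ∨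
      (∀ (j : ℤ) (n : ℕ), ∃ i, (fun k : ℤ => k+1)^[n] i = j) := by
    right
    intro j n
    exact ⟨j - n, by rw [intIter]; ring⟩
  refine ⟨?_, ?_, ?_, ?_⟩
  · intro B hB hch
    exact lp_mixing p hp (fun k => k+1) hsuccN horbN hcaseN B
      (fun i x y h => by rw [hB x, hB y]; exact congrArg _ h) hch.2
  · intro B hB hch
    exact c0_mixing (fun k => k+1) hsuccN horbN hcaseN B
      (fun i x y h => by rw [hB x, hB y]; exact congrArg _ h) hch.2
  · intro B hB hch
    exact lp_mixing p hp (fun k => k+1) hsuccZ horbZ hcaseZ B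
      (fun i x y h => by rw [hB x, hB y]; exact congrArg _ h) hch.2
  · intro B hB hch
    exact c0_mixing (fun k => k+1) hsuccZ horbZ hcaseZ B
      (fun i x y h => by rw [hB x, hB y]; exact congrArg _ h) hch.2
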